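/- arXiv:1701.03225 — 7 statements merged into one kernel-verified Lean document; each statement's English description precedes it below -/
import Mathlib

section
/- Let L be a nondegenerate integral lattice, l ∈ L a primitive vector with (l,l) ≠ 0, and σ_l the reflection v ↦ v - (2(v,l)/(l,l))·l on L⊗ℚ. Then σ_l maps L into L if and only if the sublattice ℤl ⊕ (l^⊥ ∩ L) has index 1 or 2 in L. Moreover, in the index-1 case (l,l) = ±div(l), and in the index-2 case (l,l) = ±2·div(l), where div(l) is the positive generator of the ideal (l, L) ⊆ ℤ. -/
/-- Let `L` be a nondegenerate integral lattice (a full, finitely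
generated `ℤ`-lattice in a rational quadratic space `(V, B)` with `B` integral on `L`),
`l ∈ L` a primitive vector with `B(l,l) ≠ 0`, `d = div(l)` the positive generator of the
ideal `(l, L) ⊆ ℤ`, `K = l^⊥ ∩ L` and `S = ℤl ⊕ K ⊆ L`.  The reflection
`σ_l(v) = v − (2(v,l)/(l,l))·l` maps `L` into `L` iff `S` has index 1 or 2 in `L`;
moreover in the index-1 case `(l,l) = ±d` and in the index-2 case `(l,l) = ±2d`. -/
theorem stmt_0 (V : Type*) [AddCommGroup V] [Module ℚ V] [FiniteDimensional ℚ V]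
    (B : V →ₗ[ℚ] V →ₗ[ℚ] ℚ)
    (hsymm : ∀ x y, B x y = B y x)
    (hnd : ∀ x : V, x ≠ 0 → ∃ y, B x y ≠ 0)
    (L : Submodule ℤ V) (hfg : L.FG)
    (hspan : Submodule.span ℚ (L : Set V) = ⊤)
    (hint : ∀ x ∈ L, ∀ y ∈ L, ∃ t : ℤ, B x y = (t : ℚ))
    (l : V) (hl : l ∈ L) (hll : B l l ≠ 0)
    (hprim : ∀ (c : ℤ) (x : V), x ∈ L → c • x = l → IsUnit c)
    (d : ℤ) (hd : 0 < d)
    (hdiv1 : ∀ x ∈ L, ∃ t : ℤ, B l x = (t : ℚ) * d)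
    (hdiv2 : ∃ x ∈ L, B l x = (d : ℚ))
    (K : Submodule ℤ V)
    (hK : K = L ⊓ (LinearMap.ker (B l)).restrictScalars ℤ)
    (S : Submodule ℤ V) (hS : S = Submodule.span ℤ {l} ⊔ K) :
    ((∀ v ∈ L, v - (2 * B v l / B l l) • l ∈ L) ↔
      (S.toAddSubgroup.relIndex L.toAddSubgroup = 1 ∨
        S.toAddSubgroup.relIndex L.toAddSubgroup = 2)) ∧
    (S.toAddSubgroup.relIndex L.toAddSubgroup = 1 →
      (B l l = (d : ℚ) ∨ B l l = -(d : ℚ))) ∧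
    (S.toAddSubgroup.relIndex L.toAddSubgroup = 2 →
      (B l l = 2 * (d : ℚ) ∨ B l l = -(2 * (d : ℚ)))) := by
  have hd0 : (d:ℚ) ≠ 0 := by exact_mod_cast hd.ne'
  obtain ⟨e, he⟩ := hdiv1 l hl
  have he0 : e ≠ 0 := by
    rintro rfl
    rw [he] at hll
    simp at hll
  have he0q : (e:ℚ) ≠ 0 := Int.cast_ne_zero.mpr he0
  have hn0 : e.natAbs ≠ 0 := Int.natAbs_ne_zero.mpr he0
  haveI : NeZero e.natAbs := ⟨hn0⟩
  -- integrality of rational multiples of the primitive vector l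
  have hrat : ∀ q : ℚ, q • l ∈ L → ∃ m : ℤ, q = (m:ℚ) := by
    intro q hq
    have hden0 : ((q.den:ℚ)) ≠ 0 := by exact_mod_cast q.den_ne_zero
    have hg : (Int.gcd q.num (q.den:ℤ) : ℤ) = 1 := by exact_mod_cast q.reduced
    have hb := Int.gcd_eq_gcd_ab q.num (q.den:ℤ)
    set u := Int.gcdA q.num (q.den:ℤ) with hu
    set w := Int.gcdB q.num (q.den:ℤ) with hw
    have h1 : (1:ℤ) = q.num * u + q.den * w := by rw [← hg]; exact hb
    have h3 : ((u:ℚ) * q + w) = ((q.den:ℚ))⁻¹ := by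
      refine eq_inv_of_mul_eq_one_right ?_
      have hmd : q * (q.den:ℚ) = q.num := Rat.mul_den_eq_num q
      have h1' : (1:ℚ) = (q.num:ℚ) * u + (q.den:ℚ) * w := by exact_mod_cast h1
      calc (q.den:ℚ) * ((u:ℚ) * q + w) = (u:ℚ) * (q * q.den) + (q.den:ℚ) * w := by ring
        _ = (q.num:ℚ) * u + (q.den:ℚ) * w := by rw [hmd]; ring
        _ = 1 := h1'.symm
    have hL1 : ((q.den:ℚ))⁻¹ • l ∈ L := by
      rw [← h3, add_smul, mul_smul, Int.cast_smul_eq_zsmul ℚ u (q • l),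
        Int.cast_smul_eq_zsmul ℚ w l]
      exact L.add_mem (L.smul_mem u hq) (L.smul_mem w hl)
    have h4 : ((q.den:ℤ)) • (((q.den:ℚ))⁻¹ • l) = l := by
      rw [← Int.cast_smul_eq_zsmul ℚ (q.den:ℤ) (((q.den:ℚ))⁻¹ • l), smul_smul]
      push_cast
      rw [mul_inv_cancel₀ hden0, one_smul]
    have hunit := hprim (q.den:ℤ) _ hL1 h4
    have hden1 : q.den = 1 := by
      have hpos : (1:ℤ) ≤ (q.den:ℤ) := by exact_mod_cast q.pos
      rcases Int.isUnit_iff.mp hunit with h | h <;> omega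
    refine ⟨q.num, ?_⟩
    conv_lhs => rw [← Rat.num_div_den q]
    rw [hden1]
    simp
  -- the value of B l x / d is an integer, with a characterization
  have hval2 : ∀ x ∈ L, ∀ t : ℤ, B l x = (t:ℚ) * d → (B l x / d).num = t := by
    intro x hx t ht
    rw [ht, mul_div_cancel_right₀ _ hd0, Rat.num_intCast]
  have hvalcast : ∀ x ∈ L, ((B l x / d).num : ℚ) * d = B l x := by
    intro x hx
    obtain ⟨t, ht⟩ := hdiv1 x hx
    rw [hval2 x hx t ht, ht]
  -- membership in S characterized by divisibility
  have hmemS : ∀ x ∈ L, (x ∈ S ↔ e ∣ (B l x / d).num) := by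
    intro x hx
    constructor
    · intro hxS
      rw [hS] at hxS
      obtain ⟨y, hy, z, hz, rfl⟩ := Submodule.mem_sup.mp hxS
      obtain ⟨m, rfl⟩ := Submodule.mem_span_singleton.mp hy
      rw [hK] at hz
      obtain ⟨hzL, hzk⟩ := Submodule.mem_inf.mp hz
      have hz0 : B l z = 0 := by
        rw [Submodule.restrictScalars_mem, LinearMap.mem_ker] at hzk
        exact hzk
      have hBx : B l (m • l + z) = ((m * e : ℤ):ℚ) * d := by
        rw [map_add, hz0, add_zero, ← Int.cast_smul_eq_zsmul ℚ m l, map_smul, smul_eq_mul, he]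
        push_cast
        try ring
      rw [hval2 _ (L.add_mem (L.smul_mem m hl) hzL) _ hBx]
      exact ⟨m, by ring⟩
    · rintro ⟨m, hm⟩
      have hBx : B l x = ((e * m : ℤ):ℚ) * d := by
        rw [← hvalcast x hx, hm]
      have hzmem : x - m • l ∈ K := by
        rw [hK]
        refine Submodule.mem_inf.mpr ⟨L.sub_mem hx (L.smul_mem m hl), ?_⟩
        rw [Submodule.restrictScalars_mem, LinearMap.mem_ker, map_sub,
          ← Int.cast_smul_eq_zsmul ℚ m l, map_smul, smul_eq_mul, he, hBx]
        push_cast; ring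
      rw [hS]
      exact Submodule.mem_sup.mpr ⟨m • l, Submodule.mem_span_singleton.mpr ⟨m, rfl⟩,
        x - m • l, hzmem, by abel⟩
  -- the additive homomorphism ψ : L → ℤ
  let ψ : L.toAddSubgroup →+ ℤ := AddMonoidHom.mk'
    (fun x => (B l x.1 / d).num)
    (by
      rintro ⟨x, hx⟩ ⟨y, hy⟩
      have hx' : x ∈ L := hx
      have hy' : y ∈ L := hy
      obtain ⟨t, ht⟩ := hdiv1 x hx'
      obtain ⟨s, hs⟩ := hdiv1 y hy'
      have hxy : B l (x + y) = ((t + s : ℤ):ℚ) * d := by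
        rw [map_add, ht, hs]; push_cast; ring
      show (B l (x + y) / (d:ℚ)).num = (B l x / d).num + (B l y / d).num
      rw [hval2 _ (L.add_mem hx' hy') _ hxy, hval2 _ hx' _ ht, hval2 _ hy' _ hs])
  let φ : L.toAddSubgroup →+ ZMod e.natAbs := (Int.castAddHom (ZMod e.natAbs)).comp ψ
  obtain ⟨x0, hx0, hx0d⟩ := hdiv2
  have hψx0 : ψ ⟨x0, hx0⟩ = 1 := hval2 x0 hx0 1 (by rw [hx0d]; push_cast; ring)
  have hsurj : Function.Surjective φ := by
    intro z
    obtain ⟨m, rfl⟩ := ZMod.intCast_surjective z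
    refine ⟨m • ⟨x0, hx0⟩, ?_⟩
    show ((ψ (m • ⟨x0, hx0⟩) : ℤ) : ZMod e.natAbs) = (m : ZMod e.natAbs)
    rw [map_zsmul, hψx0, smul_eq_mul, mul_one]
  have hker : φ.ker = S.toAddSubgroup.addSubgroupOf L.toAddSubgroup := by
    ext x
    have hx : x.1 ∈ L := x.2
    rw [AddMonoidHom.mem_ker, AddSubgroup.mem_addSubgroupOf]
    show ((ψ x : ℤ) : ZMod e.natAbs) = 0 ↔ _
    rw [ZMod.intCast_zmod_eq_zero_iff_dvd, Int.natAbs_dvd]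
    show e ∣ (B l x.1 / d).num ↔ x.1 ∈ S.toAddSubgroup
    rw [Submodule.mem_toAddSubgroup]
    exact (hmemS x.1 hx).symm
  have key : S.toAddSubgroup.relIndex L.toAddSubgroup = e.natAbs := by
    show (S.toAddSubgroup.addSubgroupOf L.toAddSubgroup).index = e.natAbs
    rw [← hker]
    show Nat.card (L.toAddSubgroup ⧸ φ.ker) = e.natAbs
    rw [Nat.card_congr (QuotientAddGroup.quotientKerEquivOfSurjective φ hsurj).toEquiv]
    exact Nat.card_zmod e.natAbs
  refine ⟨⟨?_, ?_⟩, ?_, ?_⟩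
  · -- reflection preserves L → index 1 or 2
    intro hσ
    have h1 := hσ x0 hx0
    have hq : (2 * B x0 l / B l l) = 2 / (e:ℚ) := by
      rw [hsymm x0 l, hx0d, he]
      field_simp
    rw [hq] at h1
    have h2 : (2/(e:ℚ)) • l ∈ L := by
      have heq : (2/(e:ℚ)) • l = x0 - (x0 - (2/(e:ℚ)) • l) := by abel
      rw [heq]
      exact L.sub_mem hx0 h1
    obtain ⟨m, hm⟩ := hrat _ h2
    have h2e : (2:ℤ) = m * e := by
      have : (2:ℚ) = (m:ℚ) * e := by
        rw [← hm]; field_simp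
      exact_mod_cast this
    have hdvd : e ∣ 2 := ⟨m, by linarith⟩
    have hna : e.natAbs ∣ 2 := by
      have := Int.natAbs_dvd_natAbs.mpr hdvd
      simpa using this
    rcases (Nat.dvd_prime Nat.prime_two).mp hna with h | h
    · left; rw [key, h]
    · right; rw [key, h]
  · -- index 1 or 2 → reflection preserves L
    intro hidx v hv
    have hedvd2 : e ∣ 2 := by
      rcases hidx with h | h <;> rw [key] at h
      · rcases Int.natAbs_eq_iff.mp h with rfl | rfl <;> decide
      · rcases Int.natAbs_eq_iff.mp h with rfl | rfl <;> decide
    obtain ⟨t, ht⟩ := hdiv1 v hv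
    obtain ⟨c, hc⟩ : e ∣ 2 * t := hedvd2.mul_right t
    have hcoef : 2 * B v l / B l l = (c : ℚ) := by
      rw [div_eq_iff hll, hsymm v l, ht, he]
      have hcq : (2:ℚ) * t = (e:ℚ) * c := by exact_mod_cast hc
      linear_combination (d:ℚ) * hcq
    rw [hcoef, Int.cast_smul_eq_zsmul ℚ c l]
    exact L.sub_mem hv (L.smul_mem c hl)
  · -- index 1 case
    intro h
    rw [key] at h
    rcases Int.natAbs_eq_iff.mp h with rfl | rfl
    · left; rw [he]; push_cast; ring
    · right; rw [he]; push_cast; ring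
  · -- index 2 case
    intro h
    rw [key] at h
    rcases Int.natAbs_eq_iff.mp h with rfl | rfl
    · left; rw [he]; push_cast; ring
    · right; rw [he]; push_cast; ring
end

section
/- Let L be a nondegenerate integral lattice and l ∈ L a primitive vector with (l,l) ≠ 0. Then the quotient group L/(ℤl ⊕ (l^⊥ ∩ L)) is cyclic of order |(l,l)|/div(l). -/
/-- Let `L` be a nondegenerate integral lattice (a full, finitely
generated `ℤ`-lattice in a rational quadratic space `(V, B)` with `B` integral on `L`)
and `l ∈ L` a primitive vector with `B(l,l) = N ≠ 0`.  With `d = div(l)` the positive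
generator of the ideal `(l, L) ⊆ ℤ`, `K = l^⊥ ∩ L` and `S = ℤl ⊕ K`, the quotient group
`L/S` is cyclic of order `|N|/d`. -/
theorem stmt_1 (V : Type*) [AddCommGroup V] [Module ℚ V] [FiniteDimensional ℚ V]
    (B : V →ₗ[ℚ] V →ₗ[ℚ] ℚ)
    (hsymm : ∀ x y, B x y = B y x)
    (hnd : ∀ x : V, x ≠ 0 → ∃ y, B x y ≠ 0)
    (L : Submodule ℤ V) (hfg : L.FG)
    (hspan : Submodule.span ℚ (L : Set V) = ⊤)
    (hint : ∀ x ∈ L, ∀ y ∈ L, ∃ t : ℤ, B x y = (t : ℚ))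
    (l : V) (hl : l ∈ L)
    (N : ℤ) (hN : B l l = (N : ℚ)) (hN0 : N ≠ 0)
    (hprim : ∀ (c : ℤ) (x : V), x ∈ L → c • x = l → IsUnit c)
    (d : ℤ) (hd : 0 < d)
    (hdiv1 : ∀ x ∈ L, ∃ t : ℤ, B l x = (t : ℚ) * d)
    (hdiv2 : ∃ x ∈ L, B l x = (d : ℚ))
    (K : Submodule ℤ V)
    (hK : K = L ⊓ (LinearMap.ker (B l)).restrictScalars ℤ)
    (S : Submodule ℤ V) (hS : S = Submodule.span ℤ {l} ⊔ K) :
    IsAddCyclic (↥L ⧸ Submodule.comap L.subtype S) ∧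
    Nat.card (↥L ⧸ Submodule.comap L.subtype S) = N.natAbs / d.natAbs := by
  have hd0 : (d : ℚ) ≠ 0 := by exact_mod_cast hd.ne'
  -- the "divided" functional f : L → ℤ
  have hf : ∀ x : ↥L, ∃! t : ℤ, B l (x : V) = (t : ℚ) * d := by
    intro x
    obtain ⟨t, ht⟩ := hdiv1 (x : V) x.2
    refine ⟨t, ht, ?_⟩
    intro s hs
    have h : (s : ℚ) * d = (t : ℚ) * d := by rw [← hs, ht]
    exact_mod_cast mul_right_cancel₀ hd0 h
  choose f hf1 hf2 using hf
  -- d divides N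
  obtain ⟨t0, ht0⟩ := hdiv1 l hl
  have hdN : N = (N / d) * d := by
    have h1 : N = t0 * d := by exact_mod_cast hN ▸ ht0
    rw [h1, Int.mul_ediv_cancel _ hd.ne']
  have hNq : ((N / d : ℤ) : ℚ) * d = (N : ℚ) := by exact_mod_cast hdN.symm
  -- additivity
  have fadd : ∀ x y : ↥L, f (x + y) = f x + f y := by
    intro x y
    refine (hf2 (x + y) (f x + f y) ?_).symm
    push_cast
    rw [add_mul, ← hf1 x, ← hf1 y]
    simp [map_add]
  have fzero : f 0 = 0 := by
    refine (hf2 0 0 ?_).symm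
    simp
  let F : ↥L →+ ℤ := ⟨⟨f, fzero⟩, fadd⟩
  set m : ℕ := (N / d).natAbs with hm
  let q : ↥L →ₗ[ℤ] ZMod m := ((Int.castAddHom (ZMod m)).comp F).toIntLinearMap
  have hq : ∀ x : ↥L, q x = ((f x : ℤ) : ZMod m) := fun _ => rfl
  -- surjectivity
  obtain ⟨x0, hx0L, hx0⟩ := hdiv2
  have hqsurj : Function.Surjective q := by
    intro z
    obtain ⟨n, rfl⟩ := ZMod.intCast_surjective z
    refine ⟨n • ⟨x0, hx0L⟩, ?_⟩
    have hfn : f (n • (⟨x0, hx0L⟩ : ↥L)) = n := by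
      refine (hf2 _ n ?_).symm
      show B l ((n • (⟨x0, hx0L⟩ : ↥L) : ↥L) : V) = (n : ℚ) * d
      have : ((n • (⟨x0, hx0L⟩ : ↥L) : ↥L) : V) = n • x0 := rfl
      rw [this, map_zsmul, hx0, zsmul_eq_mul]
      try push_cast
      try ring
    rw [hq, hfn]
  -- kernel computation
  have hker : Submodule.comap L.subtype S = LinearMap.ker q := by
    ext x
    simp only [Submodule.mem_comap, LinearMap.mem_ker, Submodule.subtype_apply]
    rw [hq, ZMod.intCast_zmod_eq_zero_iff_dvd, hm, Int.natCast_natAbs, abs_dvd]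
    constructor
    · intro hx
      rw [hS] at hx
      obtain ⟨s, hs, k, hk, hsk⟩ := Submodule.mem_sup.mp hx
      obtain ⟨a, rfl⟩ := Submodule.mem_span_singleton.mp hs
      rw [hK] at hk
      have hkerk : B l k = 0 := hk.2
      have hBx : B l (x : V) = (a : ℚ) * N := by
        rw [← hsk, map_add, map_zsmul, hN, hkerk, zsmul_eq_mul]
        push_cast
        ring_nf
      have h2 : (f x : ℚ) * d = ((a * (N / d) : ℤ) : ℚ) * d := by
        rw [← hf1 x, hBx]
        push_cast
        linear_combination (a : ℚ) * hNq.symm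
      have h3 : f x = a * (N / d) := by
        exact_mod_cast mul_right_cancel₀ hd0 h2
      exact ⟨a, by rw [h3, mul_comm]⟩
    · rintro ⟨c, hc⟩
      rw [hS]
      refine Submodule.mem_sup.mpr ⟨c • l, Submodule.mem_span_singleton.mpr ⟨c, rfl⟩,
        (x : V) - c • l, ?_, by abel⟩
      rw [hK, Submodule.mem_inf]
      refine ⟨L.sub_mem x.2 (L.smul_mem c hl), ?_⟩
      show (x : V) - c • l ∈ LinearMap.ker (B l)
      rw [LinearMap.mem_ker, map_sub, map_zsmul, hN, hf1 x, hc, zsmul_eq_mul]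
      push_cast
      linear_combination (c : ℚ) * hNq
  -- the equivalence
  let e : (↥L ⧸ Submodule.comap L.subtype S) ≃ₗ[ℤ] ZMod m :=
    (Submodule.quotEquivOfEq _ _ hker).trans (q.quotKerEquivOfSurjective hqsurj)
  have hcard : Nat.card (↥L ⧸ Submodule.comap L.subtype S) = m := by
    rw [Nat.card_congr e.toEquiv, Nat.card_zmod]
  constructor
  · exact isAddCyclic_of_surjective e.symm.toAddMonoidHom e.symm.surjective
  · rw [hcard, hm]
    obtain ⟨t, ht⟩ : d ∣ N := ⟨N / d, by rw [mul_comm]; exact hdN⟩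
    rw [ht, Int.mul_ediv_cancel_left _ hd.ne', Int.natAbs_mul,
      Nat.mul_div_cancel_left _ (Int.natAbs_pos.mpr hd.ne')]
end

section
/- Let G = ℤ/m act linearly on a finite-dimensional complex vector space V, and suppose g ∈ G acts as a quasi-reflection on V (all eigenvalues are 1 except one, which is a root of unity ≠ 1), where V decomposes as U ⊕ ⊕_i W_{d_i,μ_i} with U defined over ℚ as a G-representation. If the reflective eigenvector δ of g lies in U, then g acts as a reflection (the exceptional eigenvalue is −1), the order of g is 2, m/ord(g) is odd, and the line ℂδ is G-stable with G acting through the unique character of order 2. -/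
/-- `x ∈ ℚ` is an integer (i.e. `x = 0` in `ℚ/ℤ`). -/
def IsIntQ (x : ℚ) : Prop := ∃ t : ℤ, x = (t : ℚ)

/-- The multiset of eigenvalue exponents (in `ℚ/ℤ`) of the generator of `ℤ/m` on the
rational irreducible summand `V_d = ⊕_{k ∈ (ℤ/d)ˣ} χ_{k/d}`. -/
def VdExp (d : ℕ) : Multiset (AddCircle (1 : ℚ)) :=
  (((Finset.univ : Finset (Fin d)).filter (fun k : Fin d => Nat.Coprime (k : ℕ) d)).val).map
    (fun k => ((((k : ℕ) : ℚ) / d : ℚ) : AddCircle (1 : ℚ)))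

/-- The multiset of eigenvalue exponents (in `ℚ/ℤ`) of the generator of `ℤ/m` on
`W_{d,μ} = ⊕_{k ∈ ℤ/d} χ_{k/d + μ}`. -/
def WdExp (d : ℕ) (μ : ℚ) : Multiset (AddCircle (1 : ℚ)) :=
  ((Finset.univ : Finset (Fin d)).val).map
    (fun k => ((((k : ℕ) : ℚ) / d + μ : ℚ) : AddCircle (1 : ℚ)))

lemma coe_circle_eq (x y : ℚ) :
    ((x : AddCircle (1 : ℚ)) = (y : AddCircle (1 : ℚ))) ↔ ∃ t : ℤ, x - y = (t : ℚ) := by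
  show (QuotientAddGroup.mk x = QuotientAddGroup.mk y) ↔ _
  rw [QuotientAddGroup.eq_iff_sub_mem, AddSubgroup.mem_zmultiples_iff]
  constructor
  · rintro ⟨t, ht⟩; exact ⟨t, by simpa using ht.symm⟩
  · rintro ⟨t, ht⟩; exact ⟨t, by simpa using ht.symm⟩

/-- `G = ℤ/m` acts on `V = V_θ = U ⊕ ⊕ᵢ W_{dᵢ,μᵢ}` for an admissible
data `θ`.  Since such a representation is diagonalizable, it is encoded by the exponents
`β : Fin n → ℚ` (a generator `g₀` of `G` acts by `diag(e(β₁),…,e(β_n))`, faithfully), a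
subset `S` of indices carrying `U` (whose exponent multiset is a union of the Galois-stable
blocks `VdExp d`, `d ∈ ds` — this is "`U` is defined over `ℚ`") while the complementary
indices carry the blocks `WdExp dᵢ μᵢ`.  Suppose `g = g₀^{m''}` acts as a quasi-reflection,
with reflective eigenvector `δ = e_j` lying in `U` (`j ∈ S`).  Then `g` acts as a
reflection (its exceptional eigenvalue `e(m''β_j)` is `−1`), `ord(g) = m/gcd(m,m'') = 2`,
`m/ord(g) = m/2` is odd, and `ℂδ` is `G`-stable with `G` acting through the unique
character of order 2 (i.e. `β_j ≡ 1/2 mod ℤ`, `ℂδ ≅ V₂`). -/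
theorem stmt_6 (m m'' n : ℕ) (hm : 1 < m) (hm''pos : 0 < m'') (hm''dvd : m'' ∣ m)
    (β : Fin n → ℚ)
    (hβm : ∀ i, IsIntQ ((m : ℚ) * β i))
    (hord : ∀ k : ℕ, 0 < k → k < m → ∃ i, ¬ IsIntQ ((k : ℚ) * β i))
    (ds : Multiset ℕ) (ws : Multiset (ℕ × ℚ))
    (hds : ∀ d ∈ ds, 0 < d ∧ d ∣ m)
    (hws : ∀ p ∈ ws, 0 < p.1 ∧ p.1 ∣ m ∧ ∃ t : ℤ, p.2 = (t : ℚ) / m)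
    (S : Finset (Fin n))
    (hU : S.val.map (fun i => ((β i : ℚ) : AddCircle (1 : ℚ))) = ds.bind VdExp)
    (hW : Sᶜ.val.map (fun i => ((β i : ℚ) : AddCircle (1 : ℚ))) =
      ws.bind (fun p => WdExp p.1 p.2))
    (hadm : ∀ k : ℕ, k ∣ m → k < m →
      ((∃ i ∈ S, ¬ IsIntQ ((k : ℚ) * β i)) ∨ ∃ p ∈ ws, 1 < p.1 / Nat.gcd p.1 k))
    (j : Fin n) (hδU : j ∈ S)
    (hqr1 : ∀ i, i ≠ j → IsIntQ ((m'' : ℚ) * β i))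
    (hqr2 : ¬ IsIntQ ((m'' : ℚ) * β j)) :
    (∃ t : ℤ, (m'' : ℚ) * β j = (t : ℚ) + 1 / 2) ∧
    m / Nat.gcd m m'' = 2 ∧
    Odd (m / 2) ∧
    (∃ t : ℤ, β j = (t : ℚ) + 1 / 2) := by
  classical
  -- β j mod ℤ lies in some VdExp d
  have hmem : ((β j : ℚ) : AddCircle (1:ℚ)) ∈ ds.bind VdExp := by
    rw [← hU]
    exact Multiset.mem_map_of_mem _ (Finset.mem_val.mpr hδU)
  rw [Multiset.mem_bind] at hmem
  obtain ⟨d, hdds, hmemd⟩ := hmem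
  obtain ⟨hdpos, hddvd⟩ := hds d hdds
  rw [VdExp, Multiset.mem_map] at hmemd
  obtain ⟨k, hkmem, hkeq⟩ := hmemd
  have hkk : ∃ a : Fin d, ((a : ℕ)).Coprime d ∧ (a : ℕ) = k := by simpa using hkmem
  obtain ⟨a₀, ha₀cop, ha₀k⟩ := hkk
  have hkcop : Nat.Coprime (k : ℕ) d := ha₀k ▸ ha₀cop
  have hklt : k < d := ha₀k ▸ a₀.isLt
  rw [coe_circle_eq] at hkeq
  obtain ⟨t₁, ht₁⟩ := hkeq
  have hβj : β j = ((k : ℕ) : ℚ) / d - (t₁ : ℚ) := by linarith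
  -- d ≤ 2
  have hd2 : d ≤ 2 := by
    by_contra hd3
    push_neg at hd3
    set k' : ℕ := if (k : ℕ) = 1 then d - 1 else 1 with hk'def
    have hk'lt : k' < d := by rw [hk'def]; split_ifs <;> omega
    have hk'cop : Nat.Coprime k' d := by
      rw [hk'def]; split_ifs with h
      · have hco : Nat.Coprime (d - 1 + 1) (d - 1) := by
          rw [add_comm]; exact Nat.coprime_add_self_left.mpr (Nat.coprime_one_left _)
        have hd1 : d - 1 + 1 = d := by omega
        rw [hd1] at hco
        exact hco.symm
      · exact Nat.coprime_one_left d
    have hk'ne : k' ≠ (k : ℕ) := by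
      rw [hk'def]; split_ifs with h <;> omega
    have hmem' : (((k' : ℚ) / d : ℚ) : AddCircle (1:ℚ)) ∈ ds.bind VdExp := by
      rw [Multiset.mem_bind]
      refine ⟨d, hdds, ?_⟩
      rw [VdExp, Multiset.mem_map]
      refine ⟨k', ?_, rfl⟩
      have : ∃ a : Fin d, ((a : ℕ)).Coprime d ∧ (a : ℕ) = k' := ⟨⟨k', hk'lt⟩, hk'cop, rfl⟩
      simpa using this
    rw [← hU, Multiset.mem_map] at hmem'
    obtain ⟨i, hiS, hieq⟩ := hmem'
    rw [coe_circle_eq] at hieq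
    obtain ⟨t₂, ht₂⟩ := hieq
    have hβi : β i = (k' : ℚ) / d + (t₂ : ℚ) := by linarith
    have hdQ : (d : ℚ) ≠ 0 := by positivity
    have hij : i ≠ j := by
      intro h; subst h
      have hq : ((k' : ℚ) - ((k : ℕ) : ℚ)) = (-(t₂ + t₁) : ℤ) * d := by
        rw [hβi] at hβj
        field_simp at hβj
        push_cast
        linarith
      have hz : ((k' : ℤ) - ((k : ℕ) : ℤ)) = (-(t₂ + t₁)) * d := by exact_mod_cast hq
      have hdz : (0 : ℤ) < (d : ℤ) := by exact_mod_cast hdpos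
      have hb1 : ((k' : ℤ) - ((k : ℕ) : ℤ)) < d := by
        have : (k' : ℤ) < d := by exact_mod_cast hk'lt
        omega
      have hb2 : -(d : ℤ) < ((k' : ℤ) - ((k : ℕ) : ℤ)) := by
        have : ((k : ℕ) : ℤ) < d := by exact_mod_cast hklt
        omega
      have hT0 : (-(t₂ + t₁) : ℤ) = 0 := by nlinarith
      rw [hT0, zero_mul] at hz
      exact hk'ne (by omega)
    obtain ⟨s, hs⟩ := hqr1 i hij
    -- d ∣ m''
    have hdvd : (d : ℤ) ∣ (m'' : ℤ) * (k' : ℤ) := by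
      refine ⟨s - (m'' : ℤ) * t₂, ?_⟩
      have hth : (m'' : ℚ) * ((k' : ℚ) / d + t₂) = s := by rw [← hβi]; exact hs
      field_simp at hth
      have hQ : (m'' : ℚ) * (k' : ℚ) = (d : ℚ) * ((s - (m'' : ℤ) * t₂ : ℤ) : ℚ) := by
        push_cast
        linear_combination hth
      exact_mod_cast hQ
    have hdm'' : d ∣ m'' := by
      have : d ∣ m'' * k' := by exact_mod_cast hdvd
      exact (Nat.Coprime.dvd_of_dvd_mul_right hk'cop.symm this)
    obtain ⟨q, hq⟩ := hdm''
    apply hqr2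
    refine ⟨(q : ℤ) * (k : ℕ) - (m'' : ℤ) * t₁, ?_⟩
    rw [hβj, hq]
    push_cast
    field_simp
  -- from d ≤ 2 deduce β j ≡ 1/2
  have hβhalf : ∃ t : ℤ, β j = (t : ℚ) + 1 / 2 := by
    interval_cases d
    · exfalso
      apply hqr2
      have hk0 : ((k : ℕ) : ℚ) = 0 := by norm_cast; omega
      refine ⟨-((m'' : ℤ) * t₁), ?_⟩
      rw [hβj, hk0]
      push_cast
      ring
    · have hk1 : ((k : ℕ) : ℚ) = 1 := by
        have : (k : ℕ) = 1 := by
          by_contra hne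
          have hk0 : (k : ℕ) = 0 := by omega
          rw [hk0] at hkcop
          simp [Nat.Coprime] at hkcop
        exact_mod_cast this
      exact ⟨-t₁, by rw [hβj, hk1]; push_cast; ring⟩
  obtain ⟨t₁, hβj⟩ := hβhalf
  -- m'' is odd
  have hm''odd : Odd m'' := by
    rcases Nat.even_or_odd m'' with he | ho
    · exfalso
      obtain ⟨u, hu⟩ := he
      apply hqr2
      refine ⟨(u : ℤ) + (m'' : ℤ) * t₁, ?_⟩
      rw [hβj, hu]
      push_cast
      ring
    · exact ho
  obtain ⟨u, hu⟩ := hm''odd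
  -- conclusion 1
  have c1 : ∃ t : ℤ, (m'' : ℚ) * β j = (t : ℚ) + 1 / 2 := by
    refine ⟨(u : ℤ) + (m'' : ℤ) * t₁, ?_⟩
    rw [hβj]
    rw [show ((m'' : ℕ) : ℚ) = ((2 * u + 1 : ℕ) : ℚ) by rw [← hu]]
    push_cast [hu]
    ring
  -- m ∣ 2 m''
  have hdvd2 : m ∣ 2 * m'' := by
    by_contra hnd
    have hr : (2 * m'') % m ≠ 0 := fun h => hnd (Nat.dvd_of_mod_eq_zero h)
    obtain ⟨i, hi⟩ := hord ((2 * m'') % m) (Nat.pos_of_ne_zero hr) (Nat.mod_lt _ (by omega))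
    apply hi
    obtain ⟨a, ha⟩ := hβm i
    have hqm : (2 * m'') % m + m * (2 * m'' / m) = 2 * m'' := Nat.mod_add_div _ _
    set q := 2 * m'' / m with hqdef
    have hcast : (((2 * m'') % m : ℕ) : ℚ) = 2 * (m'' : ℚ) - (m : ℚ) * q := by
      have : (((2 * m'') % m : ℕ) : ℚ) + (m : ℚ) * q = 2 * m'' := by exact_mod_cast hqm
      linarith
    rcases eq_or_ne i j with rfl | hij'
    · obtain ⟨c, hc⟩ := c1
      refine ⟨2 * c + 1 - (q : ℤ) * a, ?_⟩
      have key : (((2 * m'') % m : ℕ) : ℚ) * β i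
          = 2 * ((m'' : ℚ) * β i) - (q : ℚ) * ((m : ℚ) * β i) := by
        rw [hcast]; ring
      rw [key, hc, ha]
      push_cast
      ring
    · obtain ⟨b, hb⟩ := hqr1 i hij'
      refine ⟨2 * b - (q : ℤ) * a, ?_⟩
      have key : (((2 * m'') % m : ℕ) : ℚ) * β i
          = 2 * ((m'' : ℚ) * β i) - (q : ℚ) * ((m : ℚ) * β i) := by
        rw [hcast]; ring
      rw [key, hb, ha]
      push_cast
      ring
  -- m'' ≠ m
  have hmne : m'' ≠ m := by
    rintro rfl
    exact hqr2 (hβm j)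
  -- m = 2 m''
  have hm2 : m = 2 * m'' := by
    obtain ⟨c, hc⟩ := hm''dvd
    have hcd : c ∣ 2 := by
      have h2 : m'' * c ∣ m'' * 2 := by
        rw [← hc, Nat.mul_comm m'' 2]; exact hdvd2
      exact (Nat.mul_dvd_mul_iff_left hm''pos).mp h2
    have hcle : c ≤ 2 := Nat.le_of_dvd (by norm_num) hcd
    have hcne0 : 1 ≤ c := by rcases Nat.eq_zero_or_pos c with h | h; · subst h; omega
                             · exact h
    interval_cases c <;> omega
  refine ⟨c1, ?_, ?_, ⟨t₁, hβj⟩⟩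
  · rw [Nat.gcd_eq_right hm''dvd, hm2, Nat.mul_div_cancel _ hm''pos]
  · have : m / 2 = m'' := by omega
    rw [this]
    exact ⟨u, by omega⟩
end

section
/- Fix a prime p and a ℤ_p-lattice (or a collection of nonnegative integers n_{p,k} with n_{p,0} > 0 and n_{p,μ} > 0, where μ = μ(p) is the largest index with n_{p,μ} ≠ 0, and Σ_k n_{p,k} = n + 2). Define m_{p,j} = Σ_{k≥0} |k − j|·n_{p,k} − μ for any index j with n_{p,j} ≠ 0. Then m_{p,j} ≥ max(0, n − n_{p,j}). -/
/-- Purely combinatorial inequality on Jordan-component ranks: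
if `f 0 ≥ 1`, `f μ ≥ 1`, `f k = 0` for `k > μ`, `∑ f k = n + 2` and `f j ≥ 1`, then
`m_{p,j} := ∑_k |k - j| · f k − μ  ≥  max(0, n − f j)`. -/
theorem stmt_9 (n μ j : ℕ) (f : ℕ → ℕ)
    (hsupp : ∀ k, μ < k → f k = 0)
    (h0 : 0 < f 0) (hμ : 0 < f μ) (hj : 0 < f j)
    (hsum : ∑ k ∈ Finset.range (μ + 1), f k = n + 2) :
    max 0 ((n : ℤ) - f j) ≤ (∑ k ∈ Finset.range (μ + 1), |(k : ℤ) - j| * f k) - μ := by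
  have hjμ : j ≤ μ := by
    by_contra h
    have := hsupp j (by omega)
    omega
  have hmem0 : (0 : ℕ) ∈ Finset.range (μ + 1) := by simp
  have hmemj : j ∈ Finset.range (μ + 1) := by simp; omega
  have hmemμ : μ ∈ Finset.range (μ + 1) := by simp
  have hsumZ : (∑ k ∈ Finset.range (μ + 1), (f k : ℤ)) = (n : ℤ) + 2 := by
    exact_mod_cast hsum
  -- Lemma A : S ≥ n + μ - f j
  have hA : (n : ℤ) + μ - f j ≤ ∑ k ∈ Finset.range (μ + 1), |(k : ℤ) - j| * f k := by
    have key : ∑ k ∈ Finset.range (μ + 1),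
        ((f k : ℤ) - (if k = j then (f j : ℤ) else 0)
          + (if k = 0 then (j : ℤ) - 1 else 0)
          + (if k = μ then (μ : ℤ) - j - 1 else 0))
        ≤ ∑ k ∈ Finset.range (μ + 1), |(k : ℤ) - j| * f k := by
      apply Finset.sum_le_sum
      intro k hk
      by_cases hkj : k = j
      · subst hkj
        simp only [sub_self, abs_zero, zero_mul, if_pos rfl]
        split_ifs <;> simp_all
      · have hne : ((k : ℤ)) ≠ (j : ℤ) := by exact_mod_cast hkj
        have habs : (1 : ℤ) ≤ |(k : ℤ) - j| := Int.one_le_abs (sub_ne_zero.mpr hne)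
        have hfk0 : (0 : ℤ) ≤ (f k : ℤ) := by positivity
        simp only [if_neg hkj]
        by_cases hk0 : k = 0
        · subst hk0
          have hkμ : (0 : ℕ) ≠ μ := by omega
          have hj1 : (1 : ℤ) ≤ (j : ℤ) := by
            have : 1 ≤ j := by omega
            exact_mod_cast this
          have habs0 : |((0 : ℕ) : ℤ) - j| = (j : ℤ) := by
            simp [abs_of_nonpos]
          have hf01 : (1 : ℤ) ≤ (f 0 : ℤ) := by exact_mod_cast h0
          rw [if_pos rfl, if_neg hkμ, habs0]
          nlinarith
        · by_cases hkμ : k = μ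
          · have hkZ : (k : ℤ) = (μ : ℤ) := by exact_mod_cast hkμ
            have hjlt : j < k := by omega
            have h1 : (1 : ℤ) ≤ (k : ℤ) - j := by
              have : (j : ℤ) < k := by exact_mod_cast hjlt
              omega
            have habsμ : |(k : ℤ) - j| = (k : ℤ) - j := abs_of_nonneg (by omega)
            have hfk1 : (1 : ℤ) ≤ (f k : ℤ) := by
              rw [hkμ]; exact_mod_cast hμ
            rw [if_neg hk0, if_pos hkμ, habsμ, ← hkZ]
            nlinarith
          · rw [if_neg hk0, if_neg hkμ]
            nlinarith
    have hrhs : ∑ k ∈ Finset.range (μ + 1),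
        ((f k : ℤ) - (if k = j then (f j : ℤ) else 0)
          + (if k = 0 then (j : ℤ) - 1 else 0)
          + (if k = μ then (μ : ℤ) - j - 1 else 0))
        = (n : ℤ) + μ - f j := by
      rw [Finset.sum_add_distrib, Finset.sum_add_distrib, Finset.sum_sub_distrib,
        Finset.sum_ite_eq' _ j, Finset.sum_ite_eq' _ 0, Finset.sum_ite_eq' _ μ,
        if_pos hmemj, if_pos hmem0, if_pos hmemμ, hsumZ]
      ring
    linarith [key, hrhs.symm.le]
  -- Lemma B : S ≥ μ
  have hB : (μ : ℤ) ≤ ∑ k ∈ Finset.range (μ + 1), |(k : ℤ) - j| * f k := by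
    have key : ∑ k ∈ Finset.range (μ + 1),
        ((if k = 0 then (j : ℤ) else 0) + (if k = μ then (μ : ℤ) - j else 0))
        ≤ ∑ k ∈ Finset.range (μ + 1), |(k : ℤ) - j| * f k := by
      apply Finset.sum_le_sum
      intro k hk
      have hfk0 : (0 : ℤ) ≤ (f k : ℤ) := by positivity
      have habsnn : (0 : ℤ) ≤ |(k : ℤ) - j| := abs_nonneg _
      by_cases hk0 : k = 0
      · subst hk0
        by_cases hμ0 : (0 : ℕ) = μ
        · have hj0 : j = 0 := by omega
          subst hj0
          rw [if_pos rfl, if_pos hμ0, ← hμ0]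
          simp
        · rw [if_pos rfl, if_neg hμ0]
          have habs0 : |((0 : ℕ) : ℤ) - j| = (j : ℤ) := by
            simp [abs_of_nonpos]
          have hf01 : (1 : ℤ) ≤ (f 0 : ℤ) := by exact_mod_cast h0
          have hjnn : (0 : ℤ) ≤ (j : ℤ) := by positivity
          rw [habs0]
          nlinarith
      · by_cases hkμ : k = μ
        · have hkZ : (k : ℤ) = (μ : ℤ) := by exact_mod_cast hkμ
          rw [if_neg hk0, if_pos hkμ, ← hkZ]
          have habsμ : (k : ℤ) - j ≤ |(k : ℤ) - j| := le_abs_self _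
          have hfk1 : (1 : ℤ) ≤ (f k : ℤ) := by
            rw [hkμ]; exact_mod_cast hμ
          nlinarith
        · rw [if_neg hk0, if_neg hkμ]
          positivity
    have hrhs : ∑ k ∈ Finset.range (μ + 1),
        ((if k = 0 then (j : ℤ) else 0) + (if k = μ then (μ : ℤ) - j else 0))
        = (μ : ℤ) := by
      rw [Finset.sum_add_distrib, Finset.sum_ite_eq' _ 0, Finset.sum_ite_eq' _ μ,
        if_pos hmem0, if_pos hmemμ]
      ring
    linarith [key, hrhs.symm.le]
  rw [max_le_iff]
  constructor <;> linarith
end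

section
/- Let L be an integral lattice of signature (2,n), l ∈ L a reflective vector of non-split type (i.e., ℤl ⊕ K has index 2 in L, where K = l^⊥ ∩ L), and l₀ ∈ L a generator of L/(ℤl ⊕ K) ≅ ℤ/2 with orthogonal projection k₀ ∈ K^∨ to K⊗ℚ. Then x = [k₀] ∈ A_K has order 2, and for γ ∈ O(K), the isometry (id, γ) of ℤl ⊕ K extends to an isometry of L if and only if γ fixes the element x of A_K. Consequently the stabilizer Γ_l of l in O(L), viewed inside O(K), equals the stabilizer of x in O(K), and [O(K) : Γ_l] is at most the number of order-2 elements of A_K. -/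
/-- The dual lattice `L^∨ = {v ∈ V : B(v, L) ⊆ ℤ}` of a `ℤ`-lattice `L` in a rational
quadratic space `(V, B)`. -/
def dualLattice {V : Type*} [AddCommGroup V] [Module ℚ V]
    (B : V →ₗ[ℚ] V →ₗ[ℚ] ℚ) (L : Submodule ℤ V) : Submodule ℤ V where
  carrier := {v | ∀ x ∈ L, ∃ t : ℤ, B v x = (t : ℚ)}
  add_mem' := by
    intro a b ha hb x hx
    obtain ⟨p, hp⟩ := ha x hx
    obtain ⟨q, hq⟩ := hb x hx
    exact ⟨p + q, by rw [map_add, LinearMap.add_apply, hp, hq]; push_cast; ring⟩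
  zero_mem' := by
    intro x hx
    exact ⟨0, by rw [map_zero, LinearMap.zero_apply]; norm_num⟩
  smul_mem' := by
    intro n v hv x hx
    obtain ⟨p, hp⟩ := hv x hx
    refine ⟨n * p, ?_⟩
    rw [map_zsmul, LinearMap.smul_apply, hp, zsmul_eq_mul]
    push_cast; ring

/-- Let `L` be a lattice of signature `(2,n)` (here: a nondegenerate
integral lattice in `(V,B)`), `l ∈ L` a reflective vector of non-split type, i.e.
`S = ℤl ⊕ K` has index 2 in `L` where `K = l^⊥ ∩ L`, and `l₀ ∈ L` a generator of
`L/S ≅ ℤ/2` with orthogonal projection `k₀ = l₀ − (B(l₀,l)/B(l,l))·l ∈ K^∨`.  Then: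
* `x = [k₀] ∈ A_K` has order 2 (`k₀ ∈ K^∨`, `k₀ ∉ K`, `2k₀ ∈ K`);
* for an isometry `γ` of `V` fixing `l` and mapping `K` onto itself, the isometry
  `(id, γ)` of `ℤl ⊕ K` preserves `L` iff `γ` fixes `x ∈ A_K`, i.e. `γk₀ − k₀ ∈ K`;
  hence the stabilizer `Γ_l ≤ O(K)` of `l` equals the stabilizer of `x` in `O(K)`;
* every `O(K)`-translate `[γk₀]` has order 2 in `A_K`, so the index `[O(K) : Γ_l]`,
  which equals the cardinality of the orbit `O(K)·x`, is at most the number of order-2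
  elements of `A_K`. -/
theorem stmt_12 (V : Type*) [AddCommGroup V] [Module ℚ V] [FiniteDimensional ℚ V]
    (B : V →ₗ[ℚ] V →ₗ[ℚ] ℚ)
    (hsymm : ∀ x y, B x y = B y x)
    (hnd : ∀ x : V, x ≠ 0 → ∃ y, B x y ≠ 0)
    (L : Submodule ℤ V) (hfg : L.FG)
    (hspan : Submodule.span ℚ (L : Set V) = ⊤)
    (hint : ∀ x ∈ L, ∀ y ∈ L, ∃ t : ℤ, B x y = (t : ℚ))
    (l : V) (hl : l ∈ L) (hll : B l l < 0)
    (hprim : ∀ (c : ℤ) (x : V), x ∈ L → c • x = l → IsUnit c)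
    (hrefl : ∀ v ∈ L, v - (2 * B v l / B l l) • l ∈ L)
    (K : Submodule ℤ V)
    (hK : K = L ⊓ (LinearMap.ker (B l)).restrictScalars ℤ)
    (S : Submodule ℤ V) (hS : S = Submodule.span ℤ {l} ⊔ K)
    (hnonsplit : S.toAddSubgroup.relIndex L.toAddSubgroup = 2)
    (l₀ : V) (hl₀ : l₀ ∈ L) (hl₀S : l₀ ∉ S)
    (k₀ : V) (hk₀ : k₀ = l₀ - (B l₀ l / B l l) • l) :
    ((∀ k ∈ K, ∃ t : ℤ, B k₀ k = (t : ℚ)) ∧ k₀ ∉ K ∧ (2 : ℤ) • k₀ ∈ K) ∧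
    (∀ γ : V ≃ₗ[ℚ] V, γ l = l → (∀ x y, B (γ x) (γ y) = B x y) →
      Submodule.map ((γ : V →ₗ[ℚ] V).restrictScalars ℤ) K = K →
      (Submodule.map ((γ : V →ₗ[ℚ] V).restrictScalars ℤ) L = L ↔ γ k₀ - k₀ ∈ K)) ∧
    (∀ γ : V ≃ₗ[ℚ] V, γ l = l → (∀ x y, B (γ x) (γ y) = B x y) →
      Submodule.map ((γ : V →ₗ[ℚ] V).restrictScalars ℤ) K = K →
      (γ k₀ ∉ K ∧ (2 : ℤ) • (γ k₀) ∈ K)) ∧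
    Nat.card {y : V ⧸ K | ∃ γ : V ≃ₗ[ℚ] V,
        (γ l = l ∧ (∀ x y, B (γ x) (γ y) = B x y) ∧
          Submodule.map ((γ : V →ₗ[ℚ] V).restrictScalars ℤ) K = K) ∧
        y = Submodule.Quotient.mk (γ k₀)} ≤
      Nat.card {y : V ⧸ K | addOrderOf y = 2 ∧
        ∃ w, w ∈ dualLattice B K ∧ B w l = 0 ∧ y = Submodule.Quotient.mk w} := by
  -- ## Basic setup
  have hBll : B l l ≠ 0 := ne_of_lt hll
  set α : ℚ := B l₀ l / B l l with hα
  have hαB : α * B l l = B l₀ l := div_mul_cancel₀ _ hBll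
  have hKmem : ∀ w : V, w ∈ K ↔ w ∈ L ∧ B l w = 0 := by
    intro w
    rw [hK]
    simp [Submodule.mem_inf, LinearMap.mem_ker]
  have hKleL : K ≤ L := fun w hw => ((hKmem w).1 hw).1
  have hSleL : S ≤ L := by
    rw [hS]
    refine sup_le ?_ hKleL
    rw [Submodule.span_le]
    simpa using hl
  -- ## Primitivity over ℚ : if `q • l ∈ L` then `q ∈ ℤ`
  have hprimQ : ∀ q : ℚ, q • l ∈ L → ∃ m : ℤ, q = (m : ℚ) := by
    intro q hq
    refine ⟨q.num, ?_⟩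
    have hcop : IsCoprime (q.num) (q.den : ℤ) := by
      rw [Int.isCoprime_iff_gcd_eq_one]
      simpa [Int.gcd] using q.reduced
    obtain ⟨u, v, huv⟩ := hcop
    have hbx : (q.den : ℤ) • (q • l) = q.num • l := by
      rw [← Int.cast_smul_eq_zsmul ℚ (q.den : ℤ), ← Int.cast_smul_eq_zsmul ℚ q.num,
        smul_smul]
      norm_cast
      rw [Rat.den_mul_eq_num]
      exact Int.cast_smul_eq_zsmul ℚ _ _
    have hunit : IsUnit ((q.den : ℤ)) := by
      refine hprim _ (u • (q • l) + v • l) (add_mem (Submodule.smul_mem _ _ hq)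
        (Submodule.smul_mem _ _ hl)) ?_
      rw [smul_add, smul_comm ((q.den : ℤ)) u, hbx, smul_smul, smul_smul, ← add_smul,
        mul_comm ((q.den : ℤ)) v, huv, one_smul]
    have hden1 : (q.den : ℤ) = 1 := by
      rcases Int.isUnit_iff.mp hunit with h | h
      · exact h
      · exfalso
        have := q.den_pos
        omega
    have : q.den = 1 := by exact_mod_cast hden1
    rw [← Rat.num_div_den q, this]
    simp
  -- ## `2α ∈ ℤ`, `α ∉ ℤ`
  have h2α : ∃ m : ℤ, 2 * α = (m : ℚ) := by
    have h1 := hrefl l₀ hl₀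
    have h2 : (2 * α) • l = l₀ - (l₀ - (2 * B l₀ l / B l l) • l) := by
      rw [hα, mul_div_assoc]
      abel
    exact hprimQ _ (h2 ▸ sub_mem hl₀ h1)
  have hBlk₀ : B l k₀ = 0 := by
    rw [hk₀, map_sub, map_smul, smul_eq_mul, hsymm l l₀, ← hαB]
    ring
  have hk₀l : B k₀ l = 0 := by rw [hsymm]; exact hBlk₀
  have hαni : ¬ ∃ m : ℤ, α = (m : ℚ) := by
    rintro ⟨m, hm⟩
    apply hl₀S
    have hk₀L : k₀ ∈ L := by
      rw [hk₀, hm, Int.cast_smul_eq_zsmul]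
      exact sub_mem hl₀ (Submodule.smul_mem _ _ hl)
    have hk₀K : k₀ ∈ K := (hKmem k₀).2 ⟨hk₀L, hBlk₀⟩
    rw [hS, Submodule.mem_sup]
    refine ⟨m • l, Submodule.mem_span_singleton.mpr ⟨m, rfl⟩, k₀, hk₀K, ?_⟩
    rw [hk₀, hm, Int.cast_smul_eq_zsmul]
    abel
  obtain ⟨m, hm⟩ := h2α
  -- ## `[k₀]` has order 2
  have h2k₀eq : (2 : ℤ) • k₀ = (2 : ℤ) • l₀ - m • l := by
    rw [← Int.cast_smul_eq_zsmul ℚ 2 k₀, ← Int.cast_smul_eq_zsmul ℚ 2 l₀,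
      ← Int.cast_smul_eq_zsmul ℚ m l, ← hm, hk₀, smul_sub, smul_smul]
    push_cast
    ring_nf
  have h2k₀K : (2 : ℤ) • k₀ ∈ K := by
    refine (hKmem _).2 ⟨?_, ?_⟩
    · rw [h2k₀eq]
      exact sub_mem (Submodule.smul_mem _ _ hl₀) (Submodule.smul_mem _ _ hl)
    · rw [map_zsmul, hBlk₀]
      simp
  have hk₀nK : k₀ ∉ K := by
    intro hmem
    apply hαni
    have hk₀L : k₀ ∈ L := hKleL hmem
    have : α • l ∈ L := by
      have : α • l = l₀ - k₀ := by rw [hk₀]; abel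
      rw [this]
      exact sub_mem hl₀ hk₀L
    exact hprimQ α this
  have hdual : ∀ k ∈ K, ∃ t : ℤ, B k₀ k = (t : ℚ) := by
    intro k hk
    obtain ⟨hkL, hkB⟩ := (hKmem k).1 hk
    have : B k₀ k = B l₀ k := by
      rw [hk₀, map_sub, LinearMap.sub_apply, map_smul, LinearMap.smul_apply, hkB]
      simp
    rw [this]
    exact hint l₀ hl₀ k hkL
  -- ## coset decomposition of `L` along `S`
  have hcoset : ∀ v ∈ L, v ∈ S ∨ v - l₀ ∈ S := by
    have hidx : (S.toAddSubgroup.addSubgroupOf L.toAddSubgroup).index = 2 := hnonsplit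
    obtain ⟨a, ha⟩ := AddSubgroup.index_eq_two_iff.mp hidx
    intro v hv
    by_cases hvS : v ∈ S
    · exact Or.inl hvS
    · right
      have h1 := ha ⟨v, hv⟩
      have h2 := ha ⟨l₀, hl₀⟩
      have hv' : v + (a : V) ∈ S := by
        rcases h1 with ⟨hp, _⟩ | ⟨hq, _⟩
        · exact hp
        · exact absurd hq hvS
      have hl₀' : l₀ + (a : V) ∈ S := by
        rcases h2 with ⟨hp, _⟩ | ⟨hq, _⟩
        · exact hp
        · exact absurd hq hl₀S
      have := sub_mem hv' hl₀'
      simpa using this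
  -- ## helpers for isometries preserving `K`
  have hKfwd : ∀ γ : V ≃ₗ[ℚ] V,
      Submodule.map ((γ : V →ₗ[ℚ] V).restrictScalars ℤ) K = K → ∀ k ∈ K, γ k ∈ K := by
    intro γ hmap k hk
    rw [← hmap]
    exact ⟨k, hk, rfl⟩
  have hKbwd : ∀ γ : V ≃ₗ[ℚ] V,
      Submodule.map ((γ : V →ₗ[ℚ] V).restrictScalars ℤ) K = K → ∀ k ∈ K, γ.symm k ∈ K := by
    intro γ hmap k hk
    rw [← hmap] at hk
    obtain ⟨k', hk', hkk⟩ := hk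
    have : γ k' = k := hkk
    rw [← this, LinearEquiv.symm_apply_apply]
    exact hk'
  -- ## `γ` maps `L` into `L` when it fixes `[k₀]`
  have hsubL : ∀ γ : V ≃ₗ[ℚ] V, γ l = l → (∀ k ∈ K, γ k ∈ K) → γ k₀ - k₀ ∈ K →
      ∀ v ∈ L, γ v ∈ L := by
    intro γ hγl hγK hγk₀ v hv
    have hγS : ∀ s ∈ S, γ s ∈ S := by
      intro s hs
      rw [hS, Submodule.mem_sup] at hs ⊢
      obtain ⟨y, hy, z, hz, rfl⟩ := hs
      obtain ⟨c, rfl⟩ := Submodule.mem_span_singleton.mp hy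
      refine ⟨c • l, Submodule.mem_span_singleton.mpr ⟨c, rfl⟩, γ z, hγK z hz, ?_⟩
      rw [map_add, map_zsmul, hγl]
    have hl₀k₀ : l₀ = k₀ + α • l := by rw [hk₀]; abel
    have hγl₀ : γ l₀ = (γ k₀ - k₀) + l₀ := by
      calc γ l₀ = γ (k₀ + α • l) := by rw [← hl₀k₀]
        _ = γ k₀ + α • l := by rw [map_add, map_smul, hγl]
        _ = (γ k₀ - k₀) + l₀ := by rw [hl₀k₀]; abel
    rcases hcoset v hv with hvS | hvS
    · exact hSleL (hγS v hvS)
    · have : γ v = γ (v - l₀) + ((γ k₀ - k₀) + l₀) := by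
        rw [← hγl₀, ← map_add, sub_add_cancel]
      rw [this]
      exact add_mem (hSleL (hγS _ hvS)) (add_mem (hKleL hγk₀) hl₀)
  -- ## the equivalence (second bullet)
  have hiff : ∀ γ : V ≃ₗ[ℚ] V, γ l = l → (∀ x y, B (γ x) (γ y) = B x y) →
      Submodule.map ((γ : V →ₗ[ℚ] V).restrictScalars ℤ) K = K →
      (Submodule.map ((γ : V →ₗ[ℚ] V).restrictScalars ℤ) L = L ↔ γ k₀ - k₀ ∈ K) := by
    intro γ hγl hiso hmapK
    constructor
    · intro hmapL
      have hγl₀L : γ l₀ ∈ L := by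
        rw [← hmapL]
        exact ⟨l₀, hl₀, rfl⟩
      have heq : γ k₀ - k₀ = γ l₀ - l₀ := by
        rw [hk₀, map_sub, map_smul, hγl]
        abel
      refine (hKmem _).2 ⟨?_, ?_⟩
      · rw [heq]; exact sub_mem hγl₀L hl₀
      · have h1 : B l (γ k₀) = 0 := by
          calc B l (γ k₀) = B (γ l) (γ k₀) := by rw [hγl]
            _ = B l k₀ := hiso l k₀
            _ = 0 := hBlk₀
        rw [map_sub, h1, hBlk₀, sub_zero]
    · intro hx
      have h1 : ∀ v ∈ L, γ v ∈ L := hsubL γ hγl (hKfwd γ hmapK) hx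
      have hγsl : γ.symm l = l := by
        conv_lhs => rw [← hγl]
        exact γ.symm_apply_apply l
      have hx' : γ.symm k₀ - k₀ ∈ K := by
        have heq : γ.symm k₀ - k₀ = γ.symm (k₀ - γ k₀) := by
          rw [map_sub, LinearEquiv.symm_apply_apply]
        rw [heq]
        have : k₀ - γ k₀ ∈ K := by
          have := neg_mem hx
          simpa using this
        exact hKbwd γ hmapK _ this
      have h2 : ∀ v ∈ L, γ.symm v ∈ L := hsubL γ.symm hγsl (hKbwd γ hmapK) hx'
      apply le_antisymm
      · rintro _ ⟨v, hv, rfl⟩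
        exact h1 v hv
      · intro v hv
        exact ⟨γ.symm v, h2 v hv, γ.apply_symm_apply v⟩
  -- ## third bullet
  have hord : ∀ γ : V ≃ₗ[ℚ] V, γ l = l → (∀ x y, B (γ x) (γ y) = B x y) →
      Submodule.map ((γ : V →ₗ[ℚ] V).restrictScalars ℤ) K = K →
      (γ k₀ ∉ K ∧ (2 : ℤ) • (γ k₀) ∈ K) := by
    intro γ hγl hiso hmapK
    constructor
    · intro h
      apply hk₀nK
      have := hKbwd γ hmapK _ h
      simpa using this
    · have : (2 : ℤ) • (γ k₀) = γ ((2 : ℤ) • k₀) := by rw [map_zsmul]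
      rw [this]
      exact hKfwd γ hmapK _ h2k₀K
  refine ⟨⟨hdual, hk₀nK, h2k₀K⟩, hiff, hord, ?_⟩
  -- ## the cardinality bound
  classical
  -- finite generation of `K`
  have hKfg : K.FG := by
    have hNoeth : IsNoetherian ℤ ↥L := isNoetherian_of_fg_of_noetherian L hfg
    have h1 : (K.comap L.subtype).FG := IsNoetherian.noetherian _
    have h2 := Submodule.FG.map L.subtype h1
    rwa [Submodule.map_comap_subtype, inf_eq_right.mpr hKleL] at h2
  obtain ⟨n, e, he⟩ := Submodule.fg_iff_exists_fin_generating_family.mp hKfg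
  set F : Finset (Fin n) → V ⧸ K := fun t =>
    Submodule.Quotient.mk (∑ i ∈ t, (2⁻¹ : ℚ) • e i) with hF
  -- the target set is contained in the (finite) range of `F`
  have hT2sub : {y : V ⧸ K | addOrderOf y = 2 ∧
      ∃ w, w ∈ dualLattice B K ∧ B w l = 0 ∧ y = Submodule.Quotient.mk w} ⊆
        Set.range F := by
    rintro y ⟨hord2, w, hwd, hwl, rfl⟩
    have h2w : (2 : ℤ) • w ∈ K := by
      have h0 : addOrderOf (Submodule.Quotient.mk w : V ⧸ K) •
          (Submodule.Quotient.mk w : V ⧸ K) = 0 := addOrderOf_nsmul_eq_zero _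
      rw [hord2, two_nsmul, ← Submodule.Quotient.mk_add,
        Submodule.Quotient.mk_eq_zero] at h0
      rwa [two_zsmul]
    rw [← he, Submodule.mem_span_range_iff_exists_fun] at h2w
    obtain ⟨c, hc⟩ := h2w
    refine ⟨Finset.univ.filter (fun i => ¬ (2 : ℤ) ∣ c i), ?_⟩
    have hw2 : w = ∑ i, ((c i : ℚ) * 2⁻¹) • e i := by
      have h1 : w = (2⁻¹ : ℚ) • ((2 : ℤ) • w) := by
        rw [← Int.cast_smul_eq_zsmul ℚ, smul_smul]
        norm_num
      conv_lhs => rw [h1]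
      rw [← hc, Finset.smul_sum]
      refine Finset.sum_congr rfl fun i _ => ?_
      rw [← Int.cast_smul_eq_zsmul ℚ, smul_smul, mul_comm]
    have hkey : (∑ i ∈ Finset.univ.filter (fun i => ¬ (2 : ℤ) ∣ c i), (2⁻¹ : ℚ) • e i)
        - w ∈ K := by
      have heq : (∑ i ∈ Finset.univ.filter (fun i => ¬ (2 : ℤ) ∣ c i), (2⁻¹ : ℚ) • e i)
          - w = ∑ i, (-((c i - if (2 : ℤ) ∣ c i then 0 else 1) / 2) : ℤ) • e i := by
        rw [Finset.sum_filter]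
        conv_lhs => rw [hw2]
        rw [← Finset.sum_sub_distrib]
        refine Finset.sum_congr rfl fun i _ => ?_
        by_cases hdv : (2 : ℤ) ∣ c i
        · obtain ⟨d, hd⟩ := hdv
          have hdv' : (2 : ℤ) ∣ c i := ⟨d, hd⟩
          have hd2 : (c i - if (2 : ℤ) ∣ c i then 0 else 1) / 2 = d := by
            rw [if_pos hdv']
            omega
          rw [hd2, if_neg (by simp [hdv']), hd, ← Int.cast_smul_eq_zsmul ℚ (-d),
            zero_sub, ← neg_smul]
          congr 1
          push_cast
          ring
        · obtain ⟨d, hd⟩ : ∃ d, c i = 2 * d + 1 := ⟨(c i - 1) / 2, by omega⟩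
          have hd2 : (c i - if (2 : ℤ) ∣ c i then 0 else 1) / 2 = d := by
            rw [if_neg hdv]
            omega
          rw [hd2, if_pos hdv, hd, ← Int.cast_smul_eq_zsmul ℚ (-d), ← sub_smul]
          congr 1
          push_cast
          ring
      rw [heq]
      refine Submodule.sum_mem _ fun i _ => ?_
      rw [← he]
      exact Submodule.smul_mem _ _ (Submodule.subset_span ⟨i, rfl⟩)
    simp only [hF]
    exact (Submodule.Quotient.eq K).mpr hkey
  have hfin : Set.Finite {y : V ⧸ K | addOrderOf y = 2 ∧
      ∃ w, w ∈ dualLattice B K ∧ B w l = 0 ∧ y = Submodule.Quotient.mk w} :=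
    (Set.finite_range F).subset hT2sub
  refine Nat.card_mono hfin ?_
  rintro y ⟨γ, ⟨hγl, hiso, hmapK⟩, rfl⟩
  obtain ⟨hnK, h2K⟩ := hord γ hγl hiso hmapK
  refine ⟨?_, γ k₀, ?_, ?_, rfl⟩
  · have hne : (Submodule.Quotient.mk (γ k₀) : V ⧸ K) ≠ 0 := by
      rw [Ne, Submodule.Quotient.mk_eq_zero]
      exact hnK
    have h2 : (2 : ℕ) • (Submodule.Quotient.mk (γ k₀) : V ⧸ K) = 0 := by
      rw [two_nsmul, ← Submodule.Quotient.mk_add, Submodule.Quotient.mk_eq_zero,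
        ← two_zsmul]
      exact h2K
    have hdvd := addOrderOf_dvd_of_nsmul_eq_zero h2
    rcases Nat.prime_two.eq_one_or_self_of_dvd _ hdvd with h | h
    · exact absurd (AddMonoid.addOrderOf_eq_one_iff.mp h) hne
    · exact h
  · intro x hx
    have hsx : γ.symm x ∈ K := hKbwd γ hmapK x hx
    have hBx : B (γ k₀) x = B k₀ (γ.symm x) := by
      calc B (γ k₀) x = B (γ k₀) (γ (γ.symm x)) := by rw [γ.apply_symm_apply]
        _ = B k₀ (γ.symm x) := hiso _ _
    rw [hBx]
    exact hdual _ hsx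
  · calc B (γ k₀) l = B (γ k₀) (γ l) := by rw [hγl]
      _ = B k₀ l := hiso _ _
      _ = 0 := hk₀l
end

section
/- Let θ = (U, (d_i, μ_i)_i) be an admissible data for the cyclic group G = ℤ/m: U is a G-representation defined over ℚ, d_i | m, μ_i ∈ (1/m)ℤ/ℤ, and for every nontrivial subgroup G' = ℤ/m' ⊆ G (with m = m'm''), either U|_{G'} is nontrivial or d_i/gcd(d_i, m'') > 1 for some i. Let V_θ = U ⊕ ⊕_i W_{d_i,μ_i} with W_{d,μ} = ⊕_{k∈ℤ/d} χ_{k/d+μ}. If a generator g of G does not act as a reflection on V_θ, then the Reid–Tai sum Σ_{V_θ}(g) = Σ_j α_j ≥ 1, where the eigenvalues of g on V_θ are e(α_j) with 0 ≤ α_j < 1. -/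
noncomputable def fractLift : AddCircle (1 : ℚ) → ℚ := fun x =>
  Quotient.liftOn' x Int.fract (by
    intro a b h
    rw [QuotientAddGroup.leftRel_apply] at h
    obtain ⟨t, ht⟩ := AddSubgroup.mem_zmultiples_iff.mp h
    rw [zsmul_eq_mul, mul_one] at ht
    have hb : b = a + (t : ℚ) := by linarith
    rw [hb, Int.fract_add_intCast])

lemma fractLift_coe (q : ℚ) : fractLift (q : AddCircle (1 : ℚ)) = Int.fract q := rfl

lemma fractLift_nonneg (x : AddCircle (1 : ℚ)) : 0 ≤ fractLift x := by
  induction x using QuotientAddGroup.induction_on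
  exact Int.fract_nonneg _

lemma msum_le (s t : Multiset ℚ) (h : s ≤ t) (ht : ∀ x ∈ t, 0 ≤ x) : s.sum ≤ t.sum := by
  obtain ⟨u, rfl⟩ := Multiset.le_iff_exists_add.mp h
  have h0 : 0 ≤ u.sum :=
    Multiset.sum_nonneg (fun x hx => ht x (Multiset.mem_add.mpr (Or.inr hx)))
  rw [Multiset.sum_add]; linarith

lemma vd_sum_ge_one (d : ℕ) (h3 : 2 < d) : 1 ≤ ((VdExp d).map fractLift).sum := by
  have hdq : (0:ℚ) < d := by exact_mod_cast (by omega : 0 < d)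
  have hmap : (VdExp d).map fractLift
      = ((Finset.univ : Finset (Fin d)).filter (fun k : Fin d => Nat.Coprime (k : ℕ) d)).val.map
        (fun k : Fin d => Int.fract (((k : ℕ) : ℚ) / d)) := by
    unfold VdExp
    simp only [Multiset.bind_def, Multiset.pure_def, Multiset.bind_singleton, Multiset.map_map]
    exact Multiset.map_congr rfl (fun k _ => fractLift_coe _)
  set a : Fin d := ⟨1, by omega⟩ with ha
  set b : Fin d := ⟨d - 1, by omega⟩ with hb
  have hab : a ≠ b := by
    intro h
    have := congrArg (fun x : Fin d => (x : ℕ)) h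
    simp only [ha, hb] at this
    omega
  have hsub : ({a, b} : Finset (Fin d)) ⊆
      (Finset.univ : Finset (Fin d)).filter (fun k : Fin d => Nat.Coprime (k : ℕ) d) := by
    intro x hx
    rcases Finset.mem_insert.mp hx with rfl | hx
    · exact Finset.mem_filter.mpr ⟨Finset.mem_univ _, Nat.coprime_one_left d⟩
    · rw [Finset.mem_singleton] at hx
      subst hx
      refine Finset.mem_filter.mpr ⟨Finset.mem_univ _, ?_⟩
      show Nat.gcd (d - 1) d = 1
      rw [Nat.gcd_self_sub_left (by omega : 1 ≤ d), Nat.gcd_one_left]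
  have hle : ((({a, b} : Finset (Fin d)).val).map
        (fun k : Fin d => Int.fract (((k : ℕ) : ℚ) / d))).sum
      ≤ (((Finset.univ : Finset (Fin d)).filter (fun k : Fin d => Nat.Coprime (k : ℕ) d)).val.map
        (fun k : Fin d => Int.fract (((k : ℕ) : ℚ) / d))).sum := by
    apply msum_le
    · exact Multiset.map_le_map (Finset.val_le_iff.mpr hsub)
    · intro x hx
      obtain ⟨y, _, rfl⟩ := Multiset.mem_map.mp hx
      exact Int.fract_nonneg _
  have hpair : ((({a, b} : Finset (Fin d)).val).map
        (fun k : Fin d => Int.fract (((k : ℕ) : ℚ) / d))).sum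
      = Int.fract (((a : ℕ) : ℚ) / d) + Int.fract (((b : ℕ) : ℚ) / d) := by
    rw [Finset.sum_map_val]
    exact Finset.sum_pair hab
  have hcast : ((d - 1 : ℕ) : ℚ) = (d : ℚ) - 1 := by
    push_cast [Nat.cast_sub (by omega : 1 ≤ d)]; ring
  have hfa : Int.fract (((a : ℕ) : ℚ) / d) = 1 / (d : ℚ) := by
    show Int.fract (((1 : ℕ) : ℚ) / d) = 1 / (d : ℚ)
    rw [Int.fract_eq_self.mpr ⟨by positivity, by rw [div_lt_one hdq]; exact_mod_cast (by omega : 1 < d)⟩]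
    norm_num
  have hfb : Int.fract (((b : ℕ) : ℚ) / d) = ((d : ℚ) - 1) / d := by
    show Int.fract (((d - 1 : ℕ) : ℚ) / d) = ((d : ℚ) - 1) / d
    have hd3 : (3:ℚ) ≤ (d:ℚ) := by exact_mod_cast (by omega : 3 ≤ d)
    rw [hcast, Int.fract_eq_self.mpr ⟨div_nonneg (by linarith) (le_of_lt hdq), by
      rw [div_lt_one hdq]; linarith⟩]
  have hone : Int.fract (((a : ℕ) : ℚ) / d) + Int.fract (((b : ℕ) : ℚ) / d) = 1 := by
    rw [hfa, hfb]
    field_simp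
    ring
  rw [hmap]
  rw [hpair, hone] at hle
  exact hle

-- from t2.lean:
lemma sum_emod_eq (d : ℕ) (hd : 0 < d) (c : ℤ) :
    ∑ k : Fin d, (((k : ℕ) : ℤ) + c) % d = ∑ k : Fin d, ((k : ℕ) : ℤ) := by
  have hdz : (0:ℤ) < (d:ℤ) := by exact_mod_cast hd
  let e : Fin d → Fin d := fun k => ⟨((((k : ℕ) : ℤ) + c) % d).toNat, by
    have h1 : 0 ≤ (((k : ℕ) : ℤ) + c) % d := Int.emod_nonneg _ (by omega)
    have h2 : (((k : ℕ) : ℤ) + c) % d < d := Int.emod_lt_of_pos _ hdz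
    omega⟩
  have he : Function.Bijective e := by
    rw [Fintype.bijective_iff_injective_and_card]
    refine ⟨fun k1 k2 h => ?_, rfl⟩
    have h1 : 0 ≤ (((k1 : ℕ) : ℤ) + c) % d := Int.emod_nonneg _ (by omega)
    have h2 : 0 ≤ (((k2 : ℕ) : ℤ) + c) % d := Int.emod_nonneg _ (by omega)
    have hv : (((k1 : ℕ) : ℤ) + c) % d = (((k2 : ℕ) : ℤ) + c) % d := by
      have := congrArg (fun x : Fin d => (x : ℕ)) h
      simp only [e] at this
      omega
    have hmod : Int.ModEq (d:ℤ) (((k1 : ℕ) : ℤ) + c) (((k2 : ℕ) : ℤ) + c) := hv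
    have hmod2 : Int.ModEq (d:ℤ) ((k1 : ℕ) : ℤ) ((k2 : ℕ) : ℤ) := hmod.add_right_cancel' c
    have e1 : ((k1 : ℕ) : ℤ) % d = ((k2 : ℕ) : ℤ) % d := hmod2
    have hb1 : ((k1 : ℕ) : ℤ) < d := by exact_mod_cast k1.isLt
    have hb2 : ((k2 : ℕ) : ℤ) < d := by exact_mod_cast k2.isLt
    rw [Int.emod_eq_of_lt (by positivity) hb1, Int.emod_eq_of_lt (by positivity) hb2] at e1
    exact Fin.ext (by exact_mod_cast e1)
  refine Fintype.sum_bijective e he _ _ (fun k => ?_)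
  simp only [e]
  have h1 : 0 ≤ (((k : ℕ) : ℤ) + c) % d := Int.emod_nonneg _ (by omega)
  omega

lemma gauss_q (d : ℕ) (hd : 0 < d) : ∑ k : Fin d, ((k : ℕ) : ℚ) = (d * (d - 1)) / 2 := by
  rw [Fin.sum_univ_eq_sum_range (fun k => ((k : ℕ) : ℚ))]
  have := Finset.sum_range_id_mul_two d
  have h2 : ((∑ i ∈ Finset.range d, i : ℕ) : ℚ) * 2 = (d : ℚ) * ((d:ℚ) - 1) := by
    rw [← Nat.cast_ofNat, ← Nat.cast_mul, this]
    push_cast [Nat.cast_sub hd]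
    ring
  push_cast at h2 ⊢
  linarith

lemma wd_fract_sum_ge (d : ℕ) (hd : 0 < d) (μ : ℚ) :
    ((d : ℚ) - 1) / 2 ≤ ∑ k : Fin d, Int.fract (((k : ℕ) : ℚ) / d + μ) := by
  have hdq : (0:ℚ) < d := by exact_mod_cast hd
  set c := ⌊(d : ℚ) * μ⌋ with hc
  set r := Int.fract ((d : ℚ) * μ) with hr
  have hr0 : 0 ≤ r := Int.fract_nonneg _
  have hr1 : r < 1 := Int.fract_lt_one _
  have hsum : (c : ℚ) + r = (d : ℚ) * μ := Int.floor_add_fract _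
  have hμ : μ = ((c : ℚ) + r) / d := by rw [hsum, mul_div_cancel_left₀ _ (ne_of_gt hdq)]
  have key : ∀ k : Fin d, (((((k : ℕ) : ℤ) + c) % d : ℤ) : ℚ) / d ≤ Int.fract (((k : ℕ) : ℚ) / d + μ) := by
    intro k
    set s : ℤ := (((k : ℕ) : ℤ) + c) % d with hs
    set q : ℤ := (((k : ℕ) : ℤ) + c) / d with hq
    have hsq : ((k : ℕ) : ℤ) + c = d * q + s := by rw [hs, hq]; exact (Int.mul_ediv_add_emod _ _).symm
    have hs0 : 0 ≤ s := Int.emod_nonneg _ (by omega)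
    have hs1 : s < d := Int.emod_lt_of_pos _ (by exact_mod_cast hd)
    have hval : ((k : ℕ) : ℚ) / d + μ = (q : ℚ) + ((s : ℚ) + r) / d := by
      rw [hμ]
      have hcast : ((k : ℕ) : ℚ) + (c : ℚ) = (d : ℚ) * q + s := by exact_mod_cast congrArg (fun z : ℤ => (z : ℚ)) hsq
      field_simp
      linarith [hcast]
    have hs1' : (s : ℚ) ≤ (d : ℚ) - 1 := by
      have h5 : s ≤ (d : ℤ) - 1 := by omega
      have h6 : ((s : ℤ) : ℚ) ≤ (((d : ℤ) - 1 : ℤ) : ℚ) := by exact_mod_cast h5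
      push_cast at h6
      linarith
    rw [hval, Int.fract_intCast_add, Int.fract_eq_self.mpr ⟨by positivity, by
      rw [div_lt_one hdq]; linarith⟩]
    have : (0:ℚ) ≤ r / d := by positivity
    rw [add_div]
    linarith
  calc ((d : ℚ) - 1) / 2 = (∑ k : Fin d, ((k : ℕ) : ℚ)) / d := by
        rw [gauss_q d hd]; field_simp
    _ = ∑ k : Fin d, (((((k : ℕ) : ℤ) + c) % d : ℤ) : ℚ) / d := by
        rw [← Finset.sum_div]
        congr 1
        have h1 := sum_emod_eq d hd c
        have h2 : ((∑ k : Fin d, ((k:ℕ):ℤ) : ℤ) : ℚ) = ((∑ k : Fin d, ((((k:ℕ):ℤ) + c) % d) : ℤ) : ℚ) := by rw [h1]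
        push_cast at h2
        linarith
    _ ≤ _ := Finset.sum_le_sum (fun k _ => key k)

lemma wd_map_sum (d : ℕ) (μ : ℚ) :
    ((WdExp d μ).map fractLift).sum = ∑ k : Fin d, Int.fract (((k : ℕ) : ℚ) / d + μ) := by
  unfold WdExp
  simp only [Multiset.bind_def, Multiset.pure_def, Multiset.bind_singleton, Multiset.map_map]
  rw [Finset.sum_map_val]
  exact Finset.sum_congr rfl (fun k _ => fractLift_coe _)

lemma wd_sum_ge_one (d : ℕ) (h3 : 2 < d) (μ : ℚ) : 1 ≤ ((WdExp d μ).map fractLift).sum := by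
  rw [wd_map_sum]
  have h1 := wd_fract_sum_ge d (by omega) μ
  have h2 : (3:ℚ) ≤ (d:ℚ) := by exact_mod_cast (by omega : 3 ≤ d)
  linarith

/-- Let `θ = (U, (dᵢ,μᵢ)ᵢ)` be an admissible data for `G = ℤ/m` and
`V_θ = U ⊕ ⊕ᵢ W_{dᵢ,μᵢ}`.  As in the formalization of the paper's Lemma, the
(diagonalizable) representation is encoded by its exponents `β : Fin n → ℚ`: a generator
`g` of `G` acts by `diag(e(β₁),…,e(β_n))` (faithfully), the indices in `S` carry `U`
(a union of Galois-stable blocks `VdExp d`, `d ∈ ds` — "`U` defined over `ℚ`"), the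
complementary indices carry the blocks `WdExp dᵢ μᵢ`, and `hadm` is the admissibility of
`θ`: for each nontrivial subgroup `ℤ/m' ⊆ ℤ/m` (of index `k = m''`), either `U` restricts
nontrivially or some `dᵢ' = dᵢ/gcd(dᵢ,k) > 1`.  If `g` does not act as a reflection on
`V_θ`, then the Reid–Tai sum `Σ_{V_θ}(g) = Σᵢ {βᵢ}` is at least 1. -/
theorem stmt_13 (m n : ℕ) (hm : 1 < m)
    (β : Fin n → ℚ)
    (hβm : ∀ i, IsIntQ ((m : ℚ) * β i))
    (hord : ∀ k : ℕ, 0 < k → k < m → ∃ i, ¬ IsIntQ ((k : ℚ) * β i))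
    (ds : Multiset ℕ) (ws : Multiset (ℕ × ℚ))
    (hds : ∀ d ∈ ds, 0 < d ∧ d ∣ m)
    (hws : ∀ p ∈ ws, 0 < p.1 ∧ p.1 ∣ m ∧ ∃ t : ℤ, p.2 = (t : ℚ) / m)
    (S : Finset (Fin n))
    (hU : S.val.map (fun i => ((β i : ℚ) : AddCircle (1 : ℚ))) = ds.bind VdExp)
    (hW : Sᶜ.val.map (fun i => ((β i : ℚ) : AddCircle (1 : ℚ))) =
      ws.bind (fun p => WdExp p.1 p.2))
    (hadm : ∀ k : ℕ, k ∣ m → k < m →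
      ((∃ i ∈ S, ¬ IsIntQ ((k : ℚ) * β i)) ∨ ∃ p ∈ ws, 1 < p.1 / Nat.gcd p.1 k))
    (hnotrefl : ¬ ∃ j : Fin n,
      (∃ t : ℤ, β j = (t : ℚ) + 1 / 2) ∧ ∀ i, i ≠ j → IsIntQ (β i)) :
    1 ≤ ∑ i, Int.fract (β i) := by
  by_contra hcon
  push_neg at hcon
  have hfr : ∀ i : Fin n, 0 ≤ Int.fract (β i) := fun i => Int.fract_nonneg _
  have hA : ∑ i ∈ S, Int.fract (β i) = ((ds.bind VdExp).map fractLift).sum := by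
    rw [← hU, Multiset.map_map, ← Finset.sum_map_val]
    exact congrArg Multiset.sum
      (Multiset.map_congr rfl (fun i _ => (fractLift_coe (β i)).symm))
  have hB : ∑ i ∈ Sᶜ, Int.fract (β i) =
      ((ws.bind (fun p => WdExp p.1 p.2)).map fractLift).sum := by
    rw [← hW, Multiset.map_map, ← Finset.sum_map_val]
    exact congrArg Multiset.sum
      (Multiset.map_congr rfl (fun i _ => (fractLift_coe (β i)).symm))
  have hT : ∑ i, Int.fract (β i) = ∑ i ∈ S, Int.fract (β i) + ∑ i ∈ Sᶜ, Int.fract (β i) :=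
    (Finset.sum_add_sum_compl S _).symm
  have hAnn : 0 ≤ ∑ i ∈ S, Int.fract (β i) := Finset.sum_nonneg (fun i _ => hfr i)
  have hBnn : 0 ≤ ∑ i ∈ Sᶜ, Int.fract (β i) := Finset.sum_nonneg (fun i _ => hfr i)
  have hds2 : ∀ d ∈ ds, d ≤ 2 := by
    intro d hd
    by_contra h3
    push_neg at h3
    have h1 : 1 ≤ ((VdExp d).map fractLift).sum := vd_sum_ge_one d h3
    have h2 : ((VdExp d).map fractLift).sum ≤ ((ds.bind VdExp).map fractLift).sum := by
      apply msum_le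
      · exact Multiset.map_le_map (Multiset.le_bind ds hd)
      · intro x hx
        obtain ⟨y, _, rfl⟩ := Multiset.mem_map.mp hx
        exact fractLift_nonneg y
    linarith
  have hws2 : ∀ p ∈ ws, p.1 ≤ 2 := by
    intro p hp
    by_contra h3
    push_neg at h3
    have h1 : 1 ≤ ((WdExp p.1 p.2).map fractLift).sum := wd_sum_ge_one p.1 h3 p.2
    have h2 : ((WdExp p.1 p.2).map fractLift).sum ≤
        ((ws.bind (fun p => WdExp p.1 p.2)).map fractLift).sum := by
      apply msum_le
      · exact Multiset.map_le_map (Multiset.le_bind ws hp)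
      · intro x hx
        obtain ⟨y, _, rfl⟩ := Multiset.mem_map.mp hx
        exact fractLift_nonneg y
    linarith
  have hSmem : ∀ i ∈ S, ∃ d ∈ ds, ∃ k : ℕ, k < d ∧ ∃ t : ℤ, β i = (k : ℚ) / d + t := by
    intro i hi
    have hmem : ((β i : ℚ) : AddCircle (1 : ℚ)) ∈ ds.bind VdExp := by
      rw [← hU]
      exact Multiset.mem_map_of_mem _ (Finset.mem_val.mpr hi)
    rw [Multiset.mem_bind] at hmem
    obtain ⟨d, hd, hmem⟩ := hmem
    unfold VdExp at hmem
    simp only [Multiset.bind_def, Multiset.pure_def, Multiset.bind_singleton,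
      Multiset.map_map, Multiset.mem_map] at hmem
    obtain ⟨k, hk, he⟩ := hmem
    refine ⟨d, hd, (k : ℕ), k.isLt, ?_⟩
    have he2 := (QuotientAddGroup.eq).mp he
    obtain ⟨t, ht⟩ := AddSubgroup.mem_zmultiples_iff.mp he2
    rw [zsmul_eq_mul, mul_one] at ht
    exact ⟨t, by linarith⟩
  rcases eq_or_lt_of_le (show 2 ≤ m by omega) with hm2 | hm2
  · -- m = 2
    have hforms : ∀ i, (∃ t : ℤ, β i = (t : ℚ)) ∨ (∃ t : ℤ, β i = (t : ℚ) + 1 / 2) := by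
      intro i
      obtain ⟨t, ht⟩ := hβm i
      rw [← hm2] at ht
      push_cast at ht
      rcases Int.even_or_odd t with ⟨u, hu⟩ | ⟨u, hu⟩
      · left; exact ⟨u, by rw [hu] at ht; push_cast at ht; linarith⟩
      · right; exact ⟨u, by rw [hu] at ht; push_cast at ht; linarith⟩
    have hfr2 : ∀ i : Fin n, (∃ t : ℤ, β i = (t : ℚ) + 1 / 2) → Int.fract (β i) = 1 / 2 := by
      rintro i ⟨t, ht⟩
      rw [ht, add_comm, Int.fract_add_intCast,
        Int.fract_eq_self.mpr ⟨by norm_num, by norm_num⟩]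
    obtain ⟨j, hj⟩ := hord 1 one_pos (by omega)
    have hj2 : ∃ t : ℤ, β j = (t : ℚ) + 1 / 2 := by
      rcases hforms j with ⟨t, ht⟩ | h
      · exact absurd ⟨t, by rw [ht]; push_cast; ring⟩ hj
      · exact h
    refine absurd ⟨j, hj2, ?_⟩ hnotrefl
    intro i hij
    rcases hforms i with ⟨t, ht⟩ | ⟨t, ht⟩
    · exact ⟨t, ht⟩
    · exfalso
      have h1 : Int.fract (β i) = 1 / 2 := hfr2 i ⟨t, ht⟩
      have h2 : Int.fract (β j) = 1 / 2 := hfr2 j hj2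
      have hle := Finset.sum_le_sum_of_subset_of_nonneg
        (Finset.subset_univ ({i, j} : Finset (Fin n))) (fun k _ _ => hfr k)
      rw [Finset.sum_pair hij] at hle
      linarith
  · -- 2 < m
    set g := Nat.gcd 2 m with hg
    have hgd : g ∣ m := Nat.gcd_dvd_right 2 m
    have hg2 : g ≤ 2 := Nat.le_of_dvd (by norm_num) (Nat.gcd_dvd_left 2 m)
    have hglt : g < m := by omega
    rcases hadm g hgd hglt with ⟨i, hiS, hni⟩ | ⟨p, hp, hgt⟩
    · apply hni
      obtain ⟨d, hd, k, hk, t, ht⟩ := hSmem i hiS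
      have hd0 : 0 < d := (hds d hd).1
      have hd2 : d ≤ 2 := hds2 d hd
      have hdvd2 : d ∣ 2 := by interval_cases d <;> norm_num
      have hdg : d ∣ g := Nat.dvd_gcd hdvd2 (hds d hd).2
      obtain ⟨e, hegcd⟩ := hdg
      refine ⟨(e : ℤ) * k + g * t, ?_⟩
      rw [ht]
      have hdq : (0:ℚ) < d := by exact_mod_cast hd0
      have hge : (g:ℚ) = (d:ℚ) * e := by exact_mod_cast hegcd
      push_cast
      rw [hge]
      field_simp
    · have hp1 : p.1 ≤ 2 := hws2 p hp
      have hp0 : 0 < p.1 := (hws p hp).1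
      have hpdvd2 : p.1 ∣ 2 := by interval_cases h : p.1 <;> norm_num
      have hpd : p.1 ∣ g := Nat.dvd_gcd hpdvd2 (hws p hp).2.1
      rw [Nat.gcd_eq_left hpd, Nat.div_self hp0] at hgt
      omega
end

section
/- Let L be an even lattice whose discriminant group satisfies: for each prime p, the p-component (A_L)_p contains a nondegenerate subgroup A_p' (with respect to the discriminant bilinear form) of the same exponent as (A_L)_p and of length ≤ 2, so that (A_L)_p = A_p' ⊕ (A_p')^⊥. If G_p is a maximal isotropic subgroup of (A_p')^⊥ (with respect to the discriminant quadratic form), then the finite quadratic form (G_p^⊥ ∩ (A_p')^⊥)/G_p is anisotropic. -/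
/-- `x ∈ ℚ` is twice an integer (i.e. `x = 0` in `ℚ/2ℤ`). -/
def IsEvenQ (x : ℚ) : Prop := ∃ t : ℤ, x = 2 * (t : ℚ)

lemma IsIntQ.add {a c : ℚ} (h1 : IsIntQ a) (h2 : IsIntQ c) : IsIntQ (a + c) := by
  obtain ⟨t, rfl⟩ := h1; obtain ⟨s, rfl⟩ := h2; exact ⟨t + s, by push_cast; ring⟩

lemma IsIntQ.sub {a c : ℚ} (h1 : IsIntQ a) (h2 : IsIntQ c) : IsIntQ (a - c) := by
  obtain ⟨t, rfl⟩ := h1; obtain ⟨s, rfl⟩ := h2; exact ⟨t - s, by push_cast; ring⟩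

lemma IsEvenQ.add {a c : ℚ} (h1 : IsEvenQ a) (h2 : IsEvenQ c) : IsEvenQ (a + c) := by
  obtain ⟨t, rfl⟩ := h1; obtain ⟨s, rfl⟩ := h2; exact ⟨t + s, by push_cast; ring⟩

/-- Let `(A, q)` be a nondegenerate finite quadratic form
(`q : A → ℚ/2ℤ` is encoded by a `ℚ`-valued function taken modulo `2ℤ`, with associated
bilinear form `b(x,y) = (q(x+y) − q(x) − q(y))/2` taken modulo `ℤ`).  If `G ⊆ A` is a
maximal isotropic subgroup, then the induced quadratic form on `G^⊥/G` is anisotropic: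
any `x ∈ G^⊥` with `q(x) = 0` in `ℚ/2ℤ` lies in `G`. -/
theorem stmt_14 (A : Type*) [AddCommGroup A] [Fintype A]
    (q : A → ℚ)
    (hq : ∀ (n : ℤ) (a : A), IsEvenQ (q (n • a) - (n : ℚ)^2 * q a))
    (b : A → A → ℚ)
    (hb : ∀ x y, b x y = (q (x + y) - q x - q y) / 2)
    (hbil : ∀ x y z, IsIntQ (b (x + y) z - b x z - b y z))
    (hnd : ∀ x : A, x ≠ 0 → ∃ y, ¬ IsIntQ (b x y))
    (G : AddSubgroup A)
    (hiso : ∀ g ∈ G, IsEvenQ (q g))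
    (hmax : ∀ G' : AddSubgroup A, G ≤ G' → (∀ g ∈ G', IsEvenQ (q g)) → G' = G) :
    ∀ x : A, (∀ g ∈ G, IsIntQ (b x g)) → IsEvenQ (q x) → x ∈ G := by
  intro x hperp hqx
  -- b 0 z is an integer
  have hb0 : ∀ z : A, IsIntQ (b 0 z) := by
    intro z
    obtain ⟨t, ht⟩ := hbil 0 0 z
    simp only [add_zero] at ht
    exact ⟨-t, by rw [show b 0 z = -(b 0 z - b 0 z - b 0 z) by ring, ht]; push_cast; ring⟩
  -- b (-x) g is an integer for g ∈ G
  have hmx : ∀ g ∈ G, IsIntQ (b (-x) g) := by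
    intro g hg
    have h2 := hbil x (-x) g
    simp only [add_neg_cancel] at h2
    have key : b (-x) g = b 0 g - (b 0 g - b x g - b (-x) g) - b x g := by ring
    rw [key]
    exact ((hb0 g).sub h2).sub (hperp g hg)
  -- b (n • x) g is an integer for all n and g ∈ G
  have hbn : ∀ (n : ℤ) (g : A), g ∈ G → IsIntQ (b (n • x) g) := by
    intro n g hg
    induction n using Int.induction_on with
    | zero => simpa using hb0 g
    | succ k ih =>
        have h := hbil ((k : ℤ) • x) x g
        have key : b (((k : ℤ) + 1) • x) g
            = (b ((k : ℤ) • x + x) g - b ((k : ℤ) • x) g - b x g)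
              + b ((k : ℤ) • x) g + b x g := by
          rw [add_smul, one_smul]; ring
        rw [key]
        exact (h.add ih).add (hperp g hg)
    | pred k ih =>
        have h := hbil ((-k : ℤ) • x) (-x) g
        have hx : ((-k : ℤ) • x) + (-x) = (-(k : ℤ) - 1) • x := by
          rw [sub_smul, one_smul]; abel
        rw [hx] at h
        have key : b ((-(k : ℤ) - 1) • x) g
            = (b ((-(k : ℤ) - 1) • x) g - b ((-k : ℤ) • x) g - b (-x) g)
              + b ((-k : ℤ) • x) g + b (-x) g := by ring
        rw [key]
        exact (h.add ih).add (hmx g hg)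
  -- q (n • x) is even
  have hqn : ∀ n : ℤ, IsEvenQ (q (n • x)) := by
    intro n
    obtain ⟨t, ht⟩ := hq n x
    obtain ⟨s, hs⟩ := hqx
    exact ⟨t + n ^ 2 * s, by
      have : q (n • x) = (q (n • x) - (n : ℚ) ^ 2 * q x) + (n : ℚ) ^ 2 * q x := by ring
      rw [this, ht, hs]; push_cast; ring⟩
  -- the subgroup G ⊔ zmultiples x is isotropic
  set G' : AddSubgroup A := G ⊔ AddSubgroup.zmultiples x with hG'
  have hGle : G ≤ G' := le_sup_left
  have hG'iso : ∀ a ∈ G', IsEvenQ (q a) := by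
    intro a ha
    have ha' : a ∈ G ⊔ AddSubgroup.zmultiples x := ha
    obtain ⟨g, hg, y, hy, rfl⟩ := AddSubgroup.mem_sup.mp ha'
    obtain ⟨n, rfl⟩ := AddSubgroup.mem_zmultiples_iff.mp hy
    -- q (g + n•x) = q g + q (n•x) + 2 * b (g, n•x), and b(g, n•x) = b(n•x, g)
    have hsym : b g (n • x) = b (n • x) g := by rw [hb, hb, add_comm]; ring
    have hqe : q (g + n • x) = q g + q (n • x) + 2 * b (n • x) g := by
      rw [← hsym, hb]; ring
    rw [hqe]
    obtain ⟨t, ht⟩ := hbn n g hg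
    have h2b : IsEvenQ (2 * b (n • x) g) := ⟨t, by rw [ht]⟩
    exact ((hiso g hg).add (hqn n)).add h2b
  have := hmax G' hGle hG'iso
  have hx : x ∈ G' := AddSubgroup.mem_sup_right (AddSubgroup.mem_zmultiples x)
  rwa [this] at hx
end
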